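/- Let X be a real vector space equipped with the core convex topology τ_c. Then (X, τ_c) is a Hausdorff locally convex topological vector space: addition X × X → X and scalar multiplication ℝ × X → X are τ_c-continuous, τ_c is Hausdorff, and every point has a neighborhood basis of convex sets. -/

import Mathlib

open Pointwise Topology

/-- Algebraic interior (core) of a set `A` in a real vector space:
`cor A = {x ∈ A | ∀ d, ∃ δ > 0, ∀ λ ∈ [0, δ], x + λ • d ∈ A}`. -/
def cor {X : Type*} [AddCommGroup X] [Module ℝ X] (A : Set X) : Set X :=
  {x | x ∈ A ∧ ∀ d : X, ∃ δ : ℝ, 0 < δ ∧ ∀ lam ∈ Set.Icc (0 : ℝ) δ, x + lam • d ∈ A}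

/-- Relative algebraic interior of `A`: directions are taken in `L(A) = span (A - A)`. -/
def icr {X : Type*} [AddCommGroup X] [Module ℝ X] (A : Set X) : Set X :=
  {x | x ∈ A ∧ ∀ d ∈ Submodule.span ℝ (A - A),
    ∃ δ : ℝ, 0 < δ ∧ ∀ lam ∈ Set.Icc (0 : ℝ) δ, x + lam • d ∈ A}

/-- Vectorial closure of `A`:
`vcl A = {b | ∃ d, ∀ δ > 0, ∃ λ ∈ [0, δ], b + λ • d ∈ A}`. -/
def vcl {X : Type*} [AddCommGroup X] [Module ℝ X] (A : Set X) : Set X :=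
  {b | ∃ d : X, ∀ δ : ℝ, 0 < δ → ∃ lam ∈ Set.Icc (0 : ℝ) δ, b + lam • d ∈ A}

/-- The core convex topology `τ_c`: the topology whose open sets are the unions of
members of `𝔅 = {A | A convex and cor A = A}`; since `𝔅` is a topological basis
(closed under binary intersection, contains `X` and `∅`), this is the topology
generated by `𝔅`. -/
def tauc (X : Type*) [AddCommGroup X] [Module ℝ X] : TopologicalSpace X :=
  TopologicalSpace.generateFrom {A : Set X | Convex ℝ A ∧ cor A = A}

section Aux
variable {X : Type*} [AddCommGroup X] [Module ℝ X]

lemma cor_subset (A : Set X) : cor A ⊆ A := fun _ hx => hx.1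

/-- Segment lemma: a convex combination (with positive weight on the core point) of a
core point and a point of `A` is in the core. -/
lemma seg_mem_cor {A : Set X} (hA : Convex ℝ A) {x y : X} (hx : x ∈ cor A) (hy : y ∈ A)
    {t : ℝ} (ht0 : 0 < t) (ht1 : t ≤ 1) : t • x + (1 - t) • y ∈ cor A := by
  refine ⟨hA hx.1 hy ht0.le (by linarith) (by ring), fun d => ?_⟩
  obtain ⟨δ, hδ, h⟩ := hx.2 (t⁻¹ • d)
  refine ⟨δ, hδ, fun lam hlam => ?_⟩
  have hmem := hA (h lam hlam) hy (b := 1 - t) ht0.le (by linarith) (by ring)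
  have key : t • (x + lam • t⁻¹ • d) + (1 - t) • y = (t • x + (1 - t) • y) + lam • d := by
    match_scalars <;> field_simp
  rwa [key] at hmem

lemma convex_cor {A : Set X} (hA : Convex ℝ A) : Convex ℝ (cor A) := by
  intro x hx y hy a b ha hb hab
  rcases eq_or_lt_of_le ha with h | h
  · have : a = 0 := h.symm
    subst this
    simpa [show b = 1 by linarith] using hy
  · have hb1 : b = 1 - a := by linarith
    subst hb1
    exact seg_mem_cor hA hx hy.1 h (by linarith)

lemma cor_cor {A : Set X} (hA : Convex ℝ A) : cor (cor A) = cor A := by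
  refine Set.Subset.antisymm (cor_subset _) (fun x hx => ?_)
  refine ⟨hx, fun d => ?_⟩
  obtain ⟨δ, hδ, h⟩ := hx.2 d
  refine ⟨δ / 2, by positivity, fun lam hlam => ?_⟩
  obtain ⟨hl0, hl⟩ := hlam
  have hyA : x + δ • d ∈ A := h δ ⟨hδ.le, le_refl _⟩
  have ht0 : (0:ℝ) < 1 - lam / δ := by
    have : lam / δ < 1 := by
      rw [div_lt_one hδ]; linarith
    linarith
  have ht1 : (1:ℝ) - lam / δ ≤ 1 := by
    have : 0 ≤ lam / δ := div_nonneg hl0 hδ.le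
    linarith
  have hmem := seg_mem_cor hA hx hyA ht0 ht1
  have key : (1 - lam / δ) • x + (1 - (1 - lam / δ)) • (x + δ • d) = x + lam • d := by
    match_scalars <;> field_simp <;> ring
  rwa [key] at hmem

lemma cor_inter {A B : Set X} (hA : cor A = A) (hB : cor B = B) : cor (A ∩ B) = A ∩ B := by
  refine Set.Subset.antisymm (cor_subset _) (fun x hx => ?_)
  refine ⟨hx, fun d => ?_⟩
  obtain ⟨δ₁, hδ₁, h₁⟩ := (hA.symm ▸ hx.1 : x ∈ cor A).2 d
  obtain ⟨δ₂, hδ₂, h₂⟩ := (hB.symm ▸ hx.2 : x ∈ cor B).2 d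
  refine ⟨min δ₁ δ₂, lt_min hδ₁ hδ₂, fun lam hlam => ?_⟩
  exact ⟨h₁ lam ⟨hlam.1, hlam.2.trans (min_le_left _ _)⟩,
         h₂ lam ⟨hlam.1, hlam.2.trans (min_le_right _ _)⟩⟩

/-- The image of a convex core-open set under an injective affine map is convex core-open. -/
lemma affine_cc {B : Set X} (hB : Convex ℝ B) (hcor : cor B = B) (a : X) {c : ℝ} (hc : c ≠ 0) :
    Convex ℝ ((fun b => a + c • b) '' B) ∧
      cor ((fun b => a + c • b) '' B) = (fun b => a + c • b) '' B := by
  constructor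
  · rintro x ⟨b₁, hb₁, rfl⟩ y ⟨b₂, hb₂, rfl⟩ s t hs ht hst
    refine ⟨s • b₁ + t • b₂, hB hb₁ hb₂ hs ht hst, ?_⟩
    match_scalars <;> ring_nf <;> nlinarith [hst]
  · refine Set.Subset.antisymm (cor_subset _) ?_
    rintro x ⟨b, hb, rfl⟩
    refine ⟨⟨b, hb, rfl⟩, fun d => ?_⟩
    obtain ⟨δ, hδ, h⟩ := (hcor.symm ▸ hb : b ∈ cor B).2 (c⁻¹ • d)
    refine ⟨δ, hδ, fun lam hlam => ?_⟩
    refine ⟨b + lam • c⁻¹ • d, h lam hlam, ?_⟩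
    match_scalars <;> field_simp

lemma cor_neg {C : Set X} (hsym : ∀ w ∈ C, -w ∈ C) {w : X} (hw : w ∈ cor C) : -w ∈ cor C := by
  refine ⟨hsym w hw.1, fun d => ?_⟩
  obtain ⟨δ, hδ, h⟩ := hw.2 (-d)
  refine ⟨δ, hδ, fun lam hlam => ?_⟩
  have := hsym _ (h lam hlam)
  convert this using 1
  module

lemma small_smul {D : Set X} (hD : Convex ℝ D) (hsym : ∀ w ∈ D, -w ∈ D) {c : ℝ}
    (hc : |c| ≤ 1) {w : X} (hw : w ∈ D) : c • w ∈ D := by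
  obtain ⟨hc1, hc2⟩ := abs_le.mp hc
  have h1 := hD hw (hsym w hw) (a := (1 + c) / 2) (b := (1 - c) / 2)
    (by linarith) (by linarith) (by ring)
  convert h1 using 1
  match_scalars
  ring

lemma basic_isOpen {B : Set X} (hB : Convex ℝ B) (hcor : cor B = B) :
    (tauc X).IsOpen B :=
  TopologicalSpace.GenerateOpen.basic B ⟨hB, hcor⟩

lemma exists_basic {S : Set X} (hS : (tauc X).IsOpen S) {x : X} (hx : x ∈ S) :
    ∃ B : Set X, Convex ℝ B ∧ cor B = B ∧ x ∈ B ∧ B ⊆ S := by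
  induction hS with
  | basic s hs => exact ⟨s, hs.1, hs.2, hx, subset_rfl⟩
  | univ =>
      refine ⟨Set.univ, convex_univ, ?_, trivial, subset_rfl⟩
      exact Set.Subset.antisymm (cor_subset _)
        (fun y _ => ⟨trivial, fun d => ⟨1, one_pos, fun _ _ => trivial⟩⟩)
  | inter s t _ _ ihs iht =>
      obtain ⟨B₁, hB₁c, hB₁cor, hxB₁, hB₁s⟩ := ihs hx.1
      obtain ⟨B₂, hB₂c, hB₂cor, hxB₂, hB₂s⟩ := iht hx.2
      exact ⟨B₁ ∩ B₂, hB₁c.inter hB₂c, cor_inter hB₁cor hB₂cor, ⟨hxB₁, hxB₂⟩,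
        Set.inter_subset_inter hB₁s hB₂s⟩
  | sUnion S _ ih =>
      obtain ⟨s, hsS, hxs⟩ := hx
      obtain ⟨B, h1, h2, h3, h4⟩ := ih s hsS hxs
      exact ⟨B, h1, h2, h3, h4.trans (Set.subset_sUnion_of_mem hsS)⟩

lemma halfspace_cc (f : X →ₗ[ℝ] ℝ) (c : ℝ) :
    Convex ℝ {w : X | f w < c} ∧ cor {w : X | f w < c} = {w : X | f w < c} := by
  refine ⟨convex_halfSpace_lt (LinearMap.isLinear f) c,
    Set.Subset.antisymm (cor_subset _) (fun x hx => ?_)⟩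
  refine ⟨hx, fun d => ?_⟩
  have hx' : f x < c := hx
  refine ⟨(c - f x) / (|f d| + 1), div_pos (by linarith) (by positivity), fun lam ⟨hl0, hl⟩ => ?_⟩
  have h1 : lam * f d ≤ lam * |f d| := by
    have := le_abs_self (f d)
    nlinarith
  have h2 : lam * |f d| < c - f x := by
    have habs : (0:ℝ) ≤ |f d| := abs_nonneg _
    rcases eq_or_lt_of_le hl0 with h | h
    · subst h; simpa using by linarith
    · calc lam * |f d| ≤ ((c - f x) / (|f d| + 1)) * |f d| := by nlinarith
        _ < ((c - f x) / (|f d| + 1)) * (|f d| + 1) := by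
            apply mul_lt_mul_of_pos_left (by linarith) (div_pos (by linarith) (by positivity))
        _ = c - f x := by field_simp
  show f (x + lam • d) < c
  rw [map_add, map_smul]
  simp only [smul_eq_mul]
  linarith

end Aux

/-- `(X, τ_c)` is a Hausdorff locally convex topological vector space:
addition and scalar multiplication are `τ_c`-continuous, `τ_c` is Hausdorff, and every
point has a neighborhood basis of convex sets. -/
theorem stmt4 (X : Type*) [AddCommGroup X] [Module ℝ X] :
    letI : TopologicalSpace X := tauc X
    ContinuousAdd X ∧ ContinuousSMul ℝ X ∧ T2Space X ∧ LocallyConvexSpace ℝ X := by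
  letI : TopologicalSpace X := tauc X
  refine ⟨?_, ?_, ?_, ?_⟩
  · -- ContinuousAdd
    refine ⟨?_⟩
    show Continuous[_, TopologicalSpace.generateFrom {A : Set X | Convex ℝ A ∧ cor A = A}]
      (fun p : X × X => p.1 + p.2)
    rw [continuous_generateFrom_iff]
    rintro B ⟨hBc, hBcor⟩
    rw [isOpen_prod_iff]
    intro x y hxy
    refine ⟨(fun b => (x - (2:ℝ)⁻¹ • (x + y)) + (2:ℝ)⁻¹ • b) '' B,
            (fun b => (y - (2:ℝ)⁻¹ • (x + y)) + (2:ℝ)⁻¹ • b) '' B, ?_, ?_, ?_, ?_, ?_⟩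
    · exact basic_isOpen (affine_cc hBc hBcor _ (by norm_num)).1
        (affine_cc hBc hBcor _ (by norm_num)).2
    · exact basic_isOpen (affine_cc hBc hBcor _ (by norm_num)).1
        (affine_cc hBc hBcor _ (by norm_num)).2
    · exact ⟨x + y, hxy, by module⟩
    · exact ⟨x + y, hxy, by module⟩
    · rintro ⟨p, q⟩ ⟨⟨b₁, hb₁, rfl⟩, ⟨b₂, hb₂, rfl⟩⟩
      have hm := hBc hb₁ hb₂ (a := (2:ℝ)⁻¹) (b := (2:ℝ)⁻¹) (by norm_num) (by norm_num)
        (by norm_num)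
      show _ ∈ B
      convert hm using 1
      module
  · -- ContinuousSMul
    refine ⟨?_⟩
    show Continuous[_, TopologicalSpace.generateFrom {A : Set X | Convex ℝ A ∧ cor A = A}]
      (fun p : ℝ × X => p.1 • p.2)
    rw [continuous_generateFrom_iff]
    rintro B ⟨hBc, hBcor⟩
    rw [isOpen_prod_iff]
    intro t x htx
    have htx' : t • x ∈ B := htx
    -- the symmetric convex set C around 0
    set C : Set X := {w | t • x + w ∈ B ∧ t • x - w ∈ B} with hCdef
    have hCc : Convex ℝ C := by
      rintro w₁ ⟨h1, h2⟩ w₂ ⟨h3, h4⟩ a b ha hb hab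
      constructor
      · have := hBc h1 h3 ha hb hab
        show t • x + (a • w₁ + b • w₂) ∈ B
        convert this using 1
        match_scalars <;> first | ring1 | linear_combination (-t) * hab | linear_combination t * hab
      · have := hBc h2 h4 ha hb hab
        show t • x - (a • w₁ + b • w₂) ∈ B
        convert this using 1
        match_scalars <;> first | ring1 | linear_combination (-t) * hab | linear_combination t * hab
    have hCsym : ∀ w ∈ C, -w ∈ C := by
      rintro w ⟨h1, h2⟩
      exact ⟨by simpa [sub_eq_add_neg] using h2, by simpa [sub_neg_eq_add] using h1⟩
    have hzero : (0 : X) ∈ cor C := by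
      refine ⟨⟨by simpa using htx', by simpa using htx'⟩, fun d => ?_⟩
      obtain ⟨δ₁, hδ₁, h₁⟩ := (hBcor.symm ▸ htx' : t • x ∈ cor B).2 d
      obtain ⟨δ₂, hδ₂, h₂⟩ := (hBcor.symm ▸ htx' : t • x ∈ cor B).2 (-d)
      refine ⟨min δ₁ δ₂, lt_min hδ₁ hδ₂, fun lam hlam => ?_⟩
      constructor
      · have := h₁ lam ⟨hlam.1, hlam.2.trans (min_le_left _ _)⟩
        show t • x + (0 + lam • d) ∈ B
        convert this using 1; module
      · have := h₂ lam ⟨hlam.1, hlam.2.trans (min_le_right _ _)⟩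
        show t • x - (0 + lam • d) ∈ B
        convert this using 1; module
    set D : Set X := cor C with hDdef
    have hDc : Convex ℝ D := convex_cor hCc
    have hDcor : cor D = D := cor_cor hCc
    have h0D : (0 : X) ∈ D := hzero
    have hDsym : ∀ w ∈ D, -w ∈ D := fun w hw => cor_neg hCsym hw
    have hDsubC : D ⊆ C := cor_subset _
    -- absorbing in direction x
    obtain ⟨δa, hδa, ha⟩ := (hDcor.symm ▸ h0D : (0:X) ∈ cor D).2 x
    obtain ⟨δb, hδb, hb⟩ := (hDcor.symm ▸ h0D : (0:X) ∈ cor D).2 (-x)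
    set δ₀ : ℝ := min δa δb with hδ₀def
    have hδ₀ : 0 < δ₀ := lt_min hδa hδb
    have habs : ∀ μ : ℝ, |μ| ≤ δ₀ → μ • x ∈ D := by
      intro μ hμ
      rcases le_or_gt 0 μ with h | h
      · have := ha μ ⟨h, (le_abs_self μ).trans (hμ.trans (min_le_left _ _))⟩
        simpa using this
      · have h' : -μ ∈ Set.Icc (0:ℝ) δb := by
          constructor
          · linarith
          · have : |μ| = -μ := abs_of_neg h
            linarith [hμ.trans (min_le_right _ _), this ▸ hμ, min_le_right δa δb]
        have := hb (-μ) ⟨h'.1, by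
          have h1 : |μ| = -μ := abs_of_neg h
          have := hμ.trans (min_le_right δa δb)
          linarith⟩
        show μ • x ∈ D
        convert this using 1
        module
    set ε : ℝ := min (δ₀ / 2) 1 with hεdef
    have hε : 0 < ε := lt_min (by positivity) one_pos
    set r : ℝ := (2 * (|t| + 1))⁻¹ with hrdef
    have hr : 0 < r := by positivity
    refine ⟨Set.Ioo (t - ε) (t + ε), (fun w => x + r • w) '' D, isOpen_Ioo, ?_, ?_, ?_, ?_⟩
    · exact basic_isOpen (affine_cc hDc hDcor x hr.ne').1 (affine_cc hDc hDcor x hr.ne').2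
    · exact ⟨by linarith, by linarith⟩
    · exact ⟨0, h0D, by simp⟩
    · rintro ⟨s, p⟩ ⟨hs, ⟨w, hw, rfl⟩⟩
      obtain ⟨hs1, hs2⟩ := hs
      have hst : |s - t| < ε := abs_sub_lt_iff.mpr ⟨by linarith, by linarith⟩
      have hsabs : |s| ≤ |t| + 1 := by
        have h1 : |s| ≤ |t| + |s - t| := by
          calc |s| = |t + (s - t)| := by ring_nf
            _ ≤ |t| + |s - t| := abs_add_le _ _
        have h2 : ε ≤ 1 := min_le_right _ _
        linarith
      have h2a : (2 * (s - t)) • x ∈ D := by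
        apply habs
        have : |2 * (s - t)| = 2 * |s - t| := by
          rw [abs_mul]; norm_num
        rw [this]
        have := hst.le.trans (min_le_left (δ₀ / 2) 1)
        linarith
      have h2b : (2 * (s * r)) • w ∈ D := by
        apply small_smul hDc hDsym _ hw
        have hrabs : |r| = r := abs_of_pos hr
        have : |2 * (s * r)| = 2 * |s| * r := by
          rw [abs_mul, abs_mul, hrabs, abs_two]; ring
        rw [this]
        calc 2 * |s| * r ≤ 2 * (|t| + 1) * r := by nlinarith
          _ = 1 := by rw [hrdef]; field_simp
      have hmid : ((2:ℝ)⁻¹) • ((2 * (s - t)) • x) + ((2:ℝ)⁻¹) • ((2 * (s * r)) • w) ∈ D :=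
        hDc h2a h2b (by norm_num) (by norm_num) (by norm_num)
      have hfin := (hDsubC hmid).1
      show s • (x + r • w) ∈ B
      convert hfin using 1
      match_scalars <;> field_simp <;> ring
  · -- T2
    refine ⟨fun {x y} hxy => ?_⟩
    have hv : x - y ≠ 0 := sub_ne_zero.mpr hxy
    have hnot : ¬ ∀ φ : Module.Dual ℝ X, φ (x - y) = 0 :=
      fun h => hv ((Module.forall_dual_apply_eq_zero_iff ℝ (x - y)).mp h)
    obtain ⟨f, hf⟩ := not_forall.mp hnot
    have hne : f x ≠ f y := fun h => hf (by rw [map_sub, h, sub_self])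
    set c : ℝ := (f x + f y) / 2 with hcdef
    rcases hne.lt_or_gt with h | h
    · refine ⟨{w | f w < c}, {w | (-f) w < -c},
        basic_isOpen (halfspace_cc f c).1 (halfspace_cc f c).2,
        basic_isOpen (halfspace_cc (-f) (-c)).1 (halfspace_cc (-f) (-c)).2,
        by simp only [Set.mem_setOf_eq]; linarith,
        by simp only [Set.mem_setOf_eq, LinearMap.neg_apply]; linarith, ?_⟩
      rw [Set.disjoint_left]
      rintro w hw1 hw2
      simp only [Set.mem_setOf_eq, LinearMap.neg_apply] at hw1 hw2
      linarith
    · refine ⟨{w | (-f) w < -c}, {w | f w < c},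
        basic_isOpen (halfspace_cc (-f) (-c)).1 (halfspace_cc (-f) (-c)).2,
        basic_isOpen (halfspace_cc f c).1 (halfspace_cc f c).2,
        by simp only [Set.mem_setOf_eq, LinearMap.neg_apply]; linarith,
        by simp only [Set.mem_setOf_eq]; linarith, ?_⟩
      rw [Set.disjoint_left]
      rintro w hw1 hw2
      simp only [Set.mem_setOf_eq, LinearMap.neg_apply] at hw1 hw2
      linarith
  · -- LocallyConvexSpace
    refine ⟨fun x => ⟨fun t => ⟨fun ht => ?_, ?_⟩⟩⟩
    · obtain ⟨U, hUsub, hUopen, hxU⟩ := mem_nhds_iff.mp ht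
      obtain ⟨Bs, hBc, hBcor, hxB, hBsub⟩ := exists_basic hUopen hxU
      have hBopen : IsOpen Bs := basic_isOpen hBc hBcor
      exact ⟨Bs, ⟨hBopen.mem_nhds hxB, hBc⟩, hBsub.trans hUsub⟩
    · rintro ⟨s, ⟨hs, _⟩, hsub⟩
      exact Filter.mem_of_superset hs hsub
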